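/- Let A be a strictly upper-triangular 0–1 n×n adjacency matrix of a directed acyclic graph on {1,…,n} (edges (i,j) only for i < j), let T = sgn((I − A)^{-1}) be its transitive closure matrix, let T_{n−1} denote the upper-left (n−1)×(n−1) block of T, and let t_n ∈ ℝ^{n−1} be the vector of the first n−1 entries of the n-th column of T. Let γ_1, …, γ_{n−1} be arbitrary real numbers (log-likelihood contributions of nodes 1,…,n−1), and for each m ∈ {1,…,n−1} define the aggregated log belief l_m = Σ_{j=1}^{n−1} T(j,m) γ_j (the sum of the contributions of all nodes j having a directed path to m, including j = m). Then, with the weight vector w_n = T_{n−1}^{-1} t_n (well defined since T_{n−1} is upper triangular with unit diagonal), the incest-free fair-rating aggregate satisfies Σ_{j < n : T(j,n) = 1} γ_j = Σ_{m=1}^{n−1} w_n(m) l_m. -/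

import Mathlib

open Matrix Finset

/-- The transitive closure matrix `T = sgn((I − A)⁻¹)`, where `sgn` is applied
entrywise, mapping nonzero entries to `1` and zero entries to `0`. -/
noncomputable def transClosure {n : ℕ} (A : Matrix (Fin n) (Fin n) ℝ) :
    Matrix (Fin n) (Fin n) ℝ :=
  Matrix.of fun i j => if (1 - A)⁻¹ i j = 0 then 0 else 1

section aux

variable {n : ℕ} (A : Matrix (Fin n) (Fin n) ℝ)

lemma aux_bt (hlt : ∀ i j, A i j ≠ 0 → i < j) :
    (1 - A).BlockTriangular id := by
  intro i j hij
  have hij' : (j : Fin n) < i := hij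
  have hA : A i j = 0 := by
    by_contra h; exact absurd (hlt i j h) (not_lt.2 hij'.le)
  simp [Matrix.sub_apply, hA, Matrix.one_apply, ne_of_gt hij']

lemma aux_det (hlt : ∀ i j, A i j ≠ 0 → i < j) : (1 - A).det = 1 := by
  rw [Matrix.det_of_upperTriangular (aux_bt A hlt)]
  have : ∀ i : Fin n, (1 - A) i i = 1 := by
    intro i
    have : A i i = 0 := by
      by_contra h; exact lt_irrefl i (hlt i i h)
    simp [Matrix.sub_apply, this]
  simp [this]

lemma aux_inv_bt (hlt : ∀ i j, A i j ≠ 0 → i < j) :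
    ((1 - A)⁻¹).BlockTriangular id := by
  haveI : Invertible (1 - A) :=
    (1 - A).invertibleOfIsUnitDet (by rw [aux_det A hlt]; exact isUnit_one)
  exact Matrix.blockTriangular_inv_of_blockTriangular (aux_bt A hlt)

lemma aux_inv_diag (hlt : ∀ i j, A i j ≠ 0 → i < j) (i : Fin n) :
    (1 - A)⁻¹ i i = 1 := by
  have hdet : IsUnit (1 - A).det := by rw [aux_det A hlt]; exact isUnit_one
  have hmul := Matrix.nonsing_inv_mul (1 - A) hdet
  have := congrFun (congrFun hmul i) i
  rw [Matrix.mul_apply, Matrix.one_apply_eq] at this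
  have hsum : ∑ k, (1 - A)⁻¹ i k * (1 - A) k i = (1 - A)⁻¹ i i * (1 - A) i i := by
    apply Finset.sum_eq_single i
    · intro k _ hk
      rcases lt_or_gt_of_ne hk with h | h
      · rw [aux_inv_bt A hlt h, zero_mul]
      · rw [aux_bt A hlt h, mul_zero]
    · intro h; exact absurd (mem_univ i) h
  have hAii : A i i = 0 := by by_contra h; exact lt_irrefl i (hlt i i h)
  rw [hsum] at this
  simpa [Matrix.sub_apply, hAii] using this

end aux

/-- Theorem 4 (Fair Rating Algorithm). The nodes are `{0, …, m}` (so `n = m + 1` nodes,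
with node `Fin.last m` the last one). Given the strictly upper-triangular 0–1 adjacency
matrix `A` of the DAG, its transitive closure `T`, the upper-left `m × m` block `Tb` of
`T`, the vector `t` of the first `m` entries of the last column of `T`, the weight vector
`w = Tb⁻¹ t`, arbitrary log-likelihood contributions `γ` of the first `m` nodes, and the
aggregated log beliefs `l q = Σ_j T(j,q) γ_j`, the incest-free fair-rating aggregate
`Σ_{j : T(j, last) = 1} γ_j` equals `Σ_q w q * l q`. -/
theorem fairRatingAlgorithm
    (m : ℕ) (A : Matrix (Fin (m + 1)) (Fin (m + 1)) ℝ)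
    (h01 : ∀ i j, A i j = 0 ∨ A i j = 1)
    (hlt : ∀ i j, A i j ≠ 0 → i < j)
    (γ : Fin m → ℝ) :
    let T := transClosure A
    let Tb : Matrix (Fin m) (Fin m) ℝ :=
      Matrix.of fun i j => T (Fin.castSucc i) (Fin.castSucc j)
    let t : Fin m → ℝ := fun i => T (Fin.castSucc i) (Fin.last m)
    let w : Fin m → ℝ := Tb⁻¹ *ᵥ t
    let l : Fin m → ℝ := fun q => ∑ j, T (Fin.castSucc j) (Fin.castSucc q) * γ j
    (∑ j ∈ Finset.univ.filter
        (fun j : Fin m => T (Fin.castSucc j) (Fin.last m) = 1), γ j) =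
      ∑ q, w q * l q := by
  intro T Tb t w l
  -- properties of T
  have hT01 : ∀ i j, T i j = 0 ∨ T i j = 1 := by
    intro i j; unfold T; unfold transClosure; simp only [Matrix.of_apply]
    split <;> simp
  have hTdiag : ∀ i, T i i = 1 := by
    intro i; unfold T; unfold transClosure
    simp [aux_inv_diag A hlt i]
  have hTbt : ∀ i j : Fin (m+1), j < i → T i j = 0 := by
    intro i j h; unfold T; unfold transClosure
    simp [aux_inv_bt A hlt (show (id j : Fin (m+1)) < id i from h)]
  -- Tb is upper triangular with unit diagonal, hence invertible
  have hTbbt : Tb.BlockTriangular id := by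
    intro i j hij
    exact hTbt _ _ (by simpa using hij)
  have hTbdet : Tb.det = 1 := by
    rw [Matrix.det_of_upperTriangular hTbbt]
    have : ∀ i : Fin m, Tb i i = 1 := fun i => hTdiag _
    simp [this]
  have hTbw : Tb *ᵥ w = t := by
    unfold w
    rw [Matrix.mulVec_mulVec, Matrix.mul_nonsing_inv Tb (by rw [hTbdet]; exact isUnit_one),
      Matrix.one_mulVec]
  -- RHS = ∑ j, t j * γ j
  have hRHS : ∑ q, w q * l q = ∑ j, t j * γ j := by
    calc ∑ q, w q * l q
        = ∑ q, ∑ j, Tb j q * w q * γ j := by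
          apply Finset.sum_congr rfl; intro q _
          rw [Finset.mul_sum]; apply Finset.sum_congr rfl; intro j _
          show w q * (Tb j q * γ j) = _; ring
      _ = ∑ j, ∑ q, Tb j q * w q * γ j := Finset.sum_comm
      _ = ∑ j, t j * γ j := by
          apply Finset.sum_congr rfl; intro j _
          rw [← Finset.sum_mul, ← hTbw]
          simp [Matrix.mulVec, dotProduct]
  rw [hRHS]
  -- LHS
  rw [Finset.sum_filter]
  apply Finset.sum_congr rfl
  intro j _
  rcases hT01 (Fin.castSucc j) (Fin.last m) with h | h
  · simp [t, h]
  · simp [t, h]
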